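/- Let S be a set of N points in ℝ^d that is (ε,β,γ)-stable with respect to a distribution with mean μ. Then S is (ε, β, γ, β/ε, γ/ε + 3β²/ε²)-good: in particular, for any T ⊆ S with |T| = 2εN, ‖(1/|T|)∑_{x∈T}(x−μ(S))(x−μ(S))^⊤ − I‖₂ ≤ γ/ε + 3β²/ε², where μ(S) is the empirical mean of S. -/

import Mathlib

open Finset

/-- The spectral norm (operator 2-norm) of a square real matrix. -/
noncomputable def specNorm {n : Type*} [Fintype n] [DecidableEq n]
    (C : Matrix n n ℝ) : ℝ :=
  ‖Matrix.toEuclideanCLM (𝕜 := ℝ) C‖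

/-- The empirical second-moment matrix of `T`, centered at `μ`. -/
noncomputable def secondMoment {d : ℕ} (T : Finset (EuclideanSpace ℝ (Fin d)))
    (μ : EuclideanSpace ℝ (Fin d)) : Matrix (Fin d) (Fin d) ℝ :=
  (T.card : ℝ)⁻¹ • ∑ x ∈ T, Matrix.vecMulVec (fun i => x i - μ i) (fun i => x i - μ i)

lemma specNorm_nonneg {n : Type*} [Fintype n] [DecidableEq n] (A : Matrix n n ℝ) :
    0 ≤ specNorm A := norm_nonneg _

lemma specNorm_add_le {n : Type*} [Fintype n] [DecidableEq n] (A B : Matrix n n ℝ) :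
    specNorm (A + B) ≤ specNorm A + specNorm B := by
  simp only [specNorm, map_add]; exact norm_add_le _ _

lemma specNorm_sub_le {n : Type*} [Fintype n] [DecidableEq n] (A B : Matrix n n ℝ) :
    specNorm (A - B) ≤ specNorm A + specNorm B := by
  simp only [specNorm, map_sub]; exact norm_sub_le _ _

set_option synthInstance.maxHeartbeats 1000000 in
lemma specNorm_smul {n : Type*} [Fintype n] [DecidableEq n] (c : ℝ) (A : Matrix n n ℝ) :
    specNorm (c • A) = |c| * specNorm A := by
  unfold specNorm
  rw [map_smul, norm_smul c (Matrix.toEuclideanCLM (𝕜 := ℝ) A), Real.norm_eq_abs]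

lemma euc_sum_apply {d : ℕ} {α : Type*} (T : Finset α) (f : α → EuclideanSpace ℝ (Fin d))
    (i : Fin d) : (∑ x ∈ T, f x) i = ∑ x ∈ T, f x i := by
  classical
  induction T using Finset.induction with
  | empty => simp
  | insert _ _ h ih => rw [Finset.sum_insert h, Finset.sum_insert h, PiLp.add_apply, ih]

lemma specNorm_vecMulVec_le {d : ℕ} (a b : EuclideanSpace ℝ (Fin d)) :
    specNorm (Matrix.vecMulVec (fun i => a i) (fun i => b i)) ≤ ‖a‖ * ‖b‖ := by
  refine ContinuousLinearMap.opNorm_le_bound _ (by positivity) fun x => ?_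
  have hx : Matrix.toEuclideanCLM (𝕜 := ℝ)
      (Matrix.vecMulVec (fun i => a i) (fun i => b i)) x = (inner ℝ b x : ℝ) • a := by
    apply (WithLp.equiv 2 _).injective
    ext i
    show (Matrix.toLin' (Matrix.vecMulVec (fun i => a i) (fun i => b i)) x) i = _
    simp [Matrix.toLin'_apply, Matrix.mulVec, Matrix.vecMulVec_apply, dotProduct,
      PiLp.inner_apply, RCLike.inner_apply, Finset.mul_sum, Finset.sum_mul]
    exact Finset.sum_congr rfl fun j _ => by ring
  rw [hx, norm_smul]
  calc ‖(inner ℝ b x : ℝ)‖ * ‖a‖ ≤ (‖b‖ * ‖x‖) * ‖a‖ := by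
        gcongr; exact norm_inner_le_norm b x
    _ = ‖a‖ * ‖b‖ * ‖x‖ := by ring

lemma secondMoment_apply {d : ℕ} (T : Finset (EuclideanSpace ℝ (Fin d)))
    (μ : EuclideanSpace ℝ (Fin d)) (i j : Fin d) :
    secondMoment T μ i j = (T.card : ℝ)⁻¹ * ∑ x ∈ T, (x i - μ i) * (x j - μ j) := by
  simp [secondMoment, Matrix.smul_apply, Matrix.sum_apply, Matrix.vecMulVec_apply,
    smul_eq_mul]

lemma arith_final (e b g V : ℝ) (he : 0 < e) (he' : e < 1 / 2) (hb : 0 ≤ b) (hg : 0 ≤ g)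
    (hV0 : 0 ≤ V) (hV : V ≤ 1 / (2 * e) * b + (1 - 2 * e) / (2 * e) * b) :
    1 / (2 * e) * g + (1 - 2 * e) / (2 * e) * g + V * b + b * V + b * b
      ≤ g / e + 3 * b ^ 2 / e ^ 2 := by
  have hVb : V * b ≤ ((1 - e) / e) * b ^ 2 := by
    have hsum : 1 / (2 * e) * b + (1 - 2 * e) / (2 * e) * b = ((1 - e) / e) * b := by
      field_simp; ring
    calc V * b ≤ (((1 - e) / e) * b) * b := by
          refine mul_le_mul_of_nonneg_right ?_ hb; rw [← hsum]; exact hV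
      _ = ((1 - e) / e) * b ^ 2 := by ring
  rw [← sub_nonneg]
  have hexp : g / e + 3 * b ^ 2 / e ^ 2
      - (1 / (2 * e) * g + (1 - 2 * e) / (2 * e) * g + V * b + b * V + b * b)
      = g + b ^ 2 * (3 - e ^ 2) / e ^ 2 - 2 * (V * b) := by
    field_simp
    ring
  rw [hexp]
  have h6 : 2 * (V * b) ≤ 2 * (((1 - e) / e) * b ^ 2) :=
    mul_le_mul_of_nonneg_left hVb (by norm_num)
  have h7 : 2 * (((1 - e) / e) * b ^ 2) ≤ b ^ 2 * (3 - e ^ 2) / e ^ 2 := by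
    rw [show 2 * (((1 - e) / e) * b ^ 2) = (2 * (1 - e) * b ^ 2) / e by ring,
      div_le_div_iff₀ he (by positivity : (0:ℝ) < e ^ 2)]
    nlinarith [sq_nonneg b, he.le, he', mul_nonneg (sq_nonneg b) he.le,
      mul_nonneg (mul_nonneg (sq_nonneg b) he.le) he.le]
  linarith [hg, h6, h7]

set_option maxHeartbeats 1600000 in
/-- If `S` is `(ε, β, γ)`-stable with respect to mean `μ`, then `S` is
`(ε, β, γ, β/ε, γ/ε + 3β²/ε²)`-good: for any subset `T ⊆ S` with `|T| = 2εN`,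
the empirical second moment of `T` centered at the empirical mean `μ(S)` of
`S` is within `γ/ε + 3β²/ε²` of the identity in spectral norm. -/
theorem stability_implies_good (d : ℕ) (ε β γ : ℝ)
    (hε : 0 < ε) (hε' : ε < 1 / 2)
    (S : Finset (EuclideanSpace ℝ (Fin d))) (hS : 0 < S.card)
    (μ : EuclideanSpace ℝ (Fin d))
    (hstab : ∀ T ⊆ S, (1 - 2 * ε) * (S.card : ℝ) ≤ (T.card : ℝ) →
      ‖(T.card : ℝ)⁻¹ • ∑ x ∈ T, (x - μ)‖ ≤ β ∧
      specNorm (secondMoment T μ - 1) ≤ γ) :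
    ∀ T ⊆ S, (T.card : ℝ) = 2 * ε * (S.card : ℝ) →
      specNorm (secondMoment T ((S.card : ℝ)⁻¹ • ∑ x ∈ S, x) - 1) ≤
        γ / ε + 3 * β ^ 2 / ε ^ 2 := by
  intro T hTS hT
  classical
  set N : ℝ := (S.card : ℝ) with hNdef
  have hN : (0:ℝ) < N := by rw [hNdef]; exact_mod_cast hS
  have ht0 : (0:ℝ) < (T.card : ℝ) := by rw [hT]; positivity
  have htN : (T.card : ℝ) < N := by rw [hT]; nlinarith
  set R := S \ T with hRdef
  have hRsub : R ⊆ S := Finset.sdiff_subset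
  have hRcard : (R.card : ℝ) = N - T.card := by
    rw [hRdef, Finset.card_sdiff_of_subset hTS, Nat.cast_sub (Finset.card_le_card hTS)]
  have hR0 : (0:ℝ) < (R.card : ℝ) := by rw [hRcard]; linarith
  obtain ⟨hβS, hγS⟩ := hstab S subset_rfl (by nlinarith)
  obtain ⟨hβR, hγR⟩ := hstab R hRsub (by rw [hRcard, hT]; nlinarith)
  set μS : EuclideanSpace ℝ (Fin d) := N⁻¹ • ∑ x ∈ S, x with hμSdef
  set mS : EuclideanSpace ℝ (Fin d) := N⁻¹ • ∑ x ∈ S, (x - μ) with hmSdef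
  set mR : EuclideanSpace ℝ (Fin d) := ((R.card : ℝ))⁻¹ • ∑ x ∈ R, (x - μ) with hmRdef
  set v : EuclideanSpace ℝ (Fin d) := ((T.card : ℝ))⁻¹ • ∑ x ∈ T, (x - μ) with hvdef
  have hβ0 : 0 ≤ β := le_trans (norm_nonneg _) hβS
  have hγ0 : 0 ≤ γ := le_trans (specNorm_nonneg _) hγS
  have hμS : ∀ i, μS i = μ i + mS i := by
    intro i
    rw [hμSdef, hmSdef]
    simp only [PiLp.smul_apply, euc_sum_apply, PiLp.sub_apply, smul_eq_mul,
      Finset.sum_sub_distrib, Finset.sum_const, nsmul_eq_mul, ← hNdef]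
    field_simp [hN.ne']
    ring
  -- vector identity
  have hsum_sdiff : ∑ x ∈ R, (x - μ) + ∑ x ∈ T, (x - μ) = ∑ x ∈ S, (x - μ) :=
    Finset.sum_sdiff hTS
  have hNT : N - (T.card:ℝ) ≠ 0 := by linarith
  have hvkey : v = (N / T.card) • mS - ((N - T.card) / T.card) • mR := by
    rw [hvdef, hmSdef, hmRdef, smul_smul, smul_smul, hRcard]
    rw [show N / (T.card:ℝ) * N⁻¹ = ((T.card:ℝ))⁻¹ by
          field_simp [hN.ne', ht0.ne'],
        show (N - T.card) / (T.card:ℝ) * (N - T.card)⁻¹ = ((T.card:ℝ))⁻¹ by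
          field_simp [hNT, ht0.ne']]
    rw [← smul_sub]
    congr 1
    exact (eq_sub_of_add_eq' hsum_sdiff)
  have hvnorm : ‖v‖ ≤ (N / T.card) * β + ((N - T.card) / T.card) * β := by
    rw [hvkey]
    refine le_trans (norm_sub_le _ _) ?_
    rw [norm_smul (N / (T.card:ℝ)) mS, norm_smul ((N - (T.card:ℝ)) / (T.card:ℝ)) mR,
      Real.norm_eq_abs, Real.norm_eq_abs, abs_of_pos (div_pos hN ht0),
      abs_of_nonneg (div_nonneg (by linarith) ht0.le)]
    gcongr
  -- matrix identity
  have hvi : ∀ i, v i = (T.card : ℝ)⁻¹ * ∑ x ∈ T, (x i - μ i) := by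
    intro i; rw [hvdef]
    simp only [PiLp.smul_apply, euc_sum_apply, PiLp.sub_apply, smul_eq_mul]
  have key : secondMoment T μS - 1 =
      (N / T.card) • (secondMoment S μ - 1)
      - ((N - T.card) / T.card) • (secondMoment R μ - 1)
      - Matrix.vecMulVec (fun i => v i) (fun i => mS i)
      - Matrix.vecMulVec (fun i => mS i) (fun i => v i)
      + Matrix.vecMulVec (fun i => mS i) (fun i => mS i) := by
    ext i j
    have hQ : ∑ x ∈ T, (x i - μ i) * (x j - μ j)
        = ∑ x ∈ S, (x i - μ i) * (x j - μ j) - ∑ x ∈ R, (x i - μ i) * (x j - μ j) :=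
      eq_sub_of_add_eq' (Finset.sum_sdiff hTS)
    have hL : ∀ k, ∑ x ∈ T, (x k - μ k) = ∑ x ∈ S, (x k - μ k) - ∑ x ∈ R, (x k - μ k) :=
      fun k => eq_sub_of_add_eq' (Finset.sum_sdiff hTS)
    have expand : ∀ x : EuclideanSpace ℝ (Fin d), (x i - μS i) * (x j - μS j)
        = (x i - μ i) * (x j - μ j) - mS j * (x i - μ i) - mS i * (x j - μ j)
          + mS i * mS j := by
      intro x; rw [hμS i, hμS j]; ring
    simp only [Matrix.sub_apply, Matrix.add_apply, Matrix.smul_apply,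
      Matrix.one_apply, Matrix.vecMulVec_apply, smul_eq_mul, secondMoment_apply]
    rw [Finset.sum_congr rfl (fun x _ => expand x)]
    rw [Finset.sum_add_distrib, Finset.sum_sub_distrib, Finset.sum_sub_distrib,
        ← Finset.mul_sum, ← Finset.mul_sum, Finset.sum_const, nsmul_eq_mul]
    rw [hQ, hvi i, hvi j, hL i, hL j, hRcard]
    by_cases hij : i = j
    · simp only [if_pos hij]
      field_simp [hN.ne', ht0.ne', hNT]
      simp only [← hNdef, hRcard]
      ring
    · simp only [if_neg hij]
      field_simp [hN.ne', ht0.ne', hNT]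
      simp only [← hNdef, hRcard]
      ring
  rw [key]
  -- bound each term
  have h1 : specNorm ((N / T.card) • (secondMoment S μ - 1)) ≤ (N / T.card) * γ := by
    rw [specNorm_smul, abs_of_pos (div_pos hN ht0)]
    exact mul_le_mul_of_nonneg_left hγS (div_pos hN ht0).le
  have h2 : specNorm (((N - T.card) / T.card) • (secondMoment R μ - 1))
      ≤ ((N - T.card) / T.card) * γ := by
    have hc : (0:ℝ) ≤ (N - T.card) / T.card := div_nonneg (by linarith) ht0.le
    rw [specNorm_smul, abs_of_nonneg hc]
    exact mul_le_mul_of_nonneg_left hγR hc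
  have h3 : specNorm (Matrix.vecMulVec (fun i => v i) (fun i => mS i)) ≤ ‖v‖ * β :=
    le_trans (specNorm_vecMulVec_le v mS)
      (mul_le_mul_of_nonneg_left hβS (norm_nonneg v))
  have h4 : specNorm (Matrix.vecMulVec (fun i => mS i) (fun i => v i)) ≤ β * ‖v‖ :=
    le_trans (specNorm_vecMulVec_le mS v)
      (mul_le_mul_of_nonneg_right hβS (norm_nonneg v))
  have h5 : specNorm (Matrix.vecMulVec (fun i => mS i) (fun i => mS i)) ≤ β * β :=
    le_trans (specNorm_vecMulVec_le mS mS)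
      (mul_le_mul hβS hβS (norm_nonneg mS) hβ0)
  have total : specNorm ((N / T.card) • (secondMoment S μ - 1)
      - ((N - T.card) / T.card) • (secondMoment R μ - 1)
      - Matrix.vecMulVec (fun i => v i) (fun i => mS i)
      - Matrix.vecMulVec (fun i => mS i) (fun i => v i)
      + Matrix.vecMulVec (fun i => mS i) (fun i => mS i))
      ≤ (N / T.card) * γ + ((N - T.card) / T.card) * γ + ‖v‖ * β + β * ‖v‖ + β * β := by
    refine le_trans (specNorm_add_le _ _) (add_le_add ?_ h5)
    refine le_trans (specNorm_sub_le _ _) (add_le_add ?_ h4)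
    refine le_trans (specNorm_sub_le _ _) (add_le_add ?_ h3)
    exact le_trans (specNorm_sub_le _ _) (add_le_add h1 h2)
  refine le_trans total ?_
  -- arithmetic
  have h2e : (0:ℝ) < 2 * ε := by positivity
  have ha : N / (T.card:ℝ) = 1 / (2 * ε) := by
    rw [hT, div_eq_div_iff (mul_pos h2e hN).ne' h2e.ne']; ring
  have hb : (N - (T.card:ℝ)) / (T.card:ℝ) = (1 - 2 * ε) / (2 * ε) := by
    rw [hT, div_eq_div_iff (mul_pos h2e hN).ne' h2e.ne']; ring
  have hV : ‖v‖ ≤ (1 / (2 * ε)) * β + ((1 - 2 * ε) / (2 * ε)) * β := by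
    rw [← ha, ← hb]; exact hvnorm
  have hV0 : 0 ≤ ‖v‖ := norm_nonneg v
  rw [ha, hb]
  exact arith_final ε β γ ‖v‖ hε hε' hβ0 hγ0 (norm_nonneg v) hV
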